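/- arXiv:1412.3008 — 5 statements merged into one kernel-verified Lean document; each statement's English description precedes it below -/
import Mathlib

section
/- For a Boolean algebra B, the set T(B) of weakly increasing n-tuples (x_1 ≤ … ≤ x_n) with componentwise lattice operations, involution (x_1,…,x_n)* = (¬x_n,…,¬x_1), and φ_i(x_1,…,x_n) = (x_i,…,x_i), is an LM_{n+1}-algebra. -/
/-- Increasing `n`-tuples over a Boolean algebra `B`. -/
abbrev TB (n : ℕ) (B : Type*) [BooleanAlgebra B] := {x : Fin n → B // Monotone x}

variable {n : ℕ} {B : Type*} [BooleanAlgebra B]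

def Tsup (x y : TB n B) : TB n B :=
  ⟨fun i => x.1 i ⊔ y.1 i, fun _ _ h => sup_le_sup (x.2 h) (y.2 h)⟩

def Tinf (x y : TB n B) : TB n B :=
  ⟨fun i => x.1 i ⊓ y.1 i, fun _ _ h => inf_le_inf (x.2 h) (y.2 h)⟩

/-- The involution `(x_1,…,x_n)* = (¬x_n,…,¬x_1)`. -/
def Tstar (x : TB n B) : TB n B :=
  ⟨fun i => (x.1 i.rev)ᶜ, fun _ _ h => compl_le_compl (x.2 (Fin.rev_le_rev.mpr h))⟩

/-- `φ_i(x_1,…,x_n) = (x_i,…,x_i)`. -/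
def Tphi (i : Fin n) (x : TB n B) : TB n B := ⟨fun _ => x.1 i, monotone_const⟩

def Ttop : TB n B := ⟨fun _ => ⊤, monotone_const⟩
def Tbot : TB n B := ⟨fun _ => ⊥, monotone_const⟩

/-- For a Boolean algebra `B`, the set `T(B)` of increasing `n`-tuples, with componentwise
lattice operations, involution `(x_1,…,x_n)* = (¬x_n,…,¬x_1)` and
`φ_i(x_1,…,x_n) = (x_i,…,x_i)`, is an `LM_{n+1}`-algebra: it is a bounded distributive
lattice (here: `Tsup`/`Tinf` are sup/inf for the componentwise order, with top `Ttop` and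
bottom `Tbot`), `Tstar` is a De Morgan involution, and the `φ`'s satisfy (L1)–(L6). -/
theorem TB_is_LM (n : ℕ) (B : Type*) [BooleanAlgebra B] :
    (∀ x y z : TB n B, Tsup x y ≤ z ↔ x ≤ z ∧ y ≤ z) ∧
    (∀ x y z : TB n B, z ≤ Tinf x y ↔ z ≤ x ∧ z ≤ y) ∧
    (∀ x : TB n B, x ≤ Ttop ∧ Tbot ≤ x) ∧
    (∀ x y z : TB n B, Tinf x (Tsup y z) = Tsup (Tinf x y) (Tinf x z)) ∧
    (∀ x : TB n B, Tstar (Tstar x) = x) ∧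
    (∀ x y : TB n B, Tstar (Tsup x y) = Tinf (Tstar x) (Tstar y)) ∧
    -- (L1)
    (∀ (i : Fin n) (x y : TB n B), Tphi i (Tsup x y) = Tsup (Tphi i x) (Tphi i y)) ∧
    -- (L2)
    (∀ (i : Fin n) (x : TB n B), Tsup (Tphi i x) (Tstar (Tphi i x)) = Ttop) ∧
    -- (L3)
    (∀ (i j : Fin n) (x : TB n B), Tphi i (Tphi j x) = Tphi j x) ∧
    -- (L4)
    (∀ (i : Fin n) (x : TB n B), Tphi i (Tstar x) = Tstar (Tphi i.rev x)) ∧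
    -- (L5)
    (∀ (i j : Fin n) (x : TB n B), i ≤ j → Tphi i x ≤ Tphi j x) ∧
    -- (L6)
    (∀ x y : TB n B, (∀ i : Fin n, Tphi i x = Tphi i y) → x = y) := by
  refine ⟨?_, ?_, ?_, ?_, ?_, ?_, ?_, ?_, ?_, ?_, ?_, ?_⟩
  · intro x y z
    constructor
    · intro h
      exact ⟨fun i => le_trans le_sup_left (h i), fun i => le_trans le_sup_right (h i)⟩
    · intro ⟨h1, h2⟩ i
      exact sup_le (h1 i) (h2 i)
  · intro x y z
    constructor
    · intro h
      exact ⟨fun i => le_trans (h i) inf_le_left, fun i => le_trans (h i) inf_le_right⟩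
    · intro ⟨h1, h2⟩ i
      exact le_inf (h1 i) (h2 i)
  · exact fun x => ⟨fun i => le_top, fun i => bot_le⟩
  · intro x y z
    exact Subtype.ext (funext fun i => inf_sup_left _ _ _)
  · intro x
    exact Subtype.ext (funext fun i => by simp [Tstar])
  · intro x y
    exact Subtype.ext (funext fun i => by simp [Tstar, Tsup, Tinf])
  · intro i x y
    exact Subtype.ext (funext fun j => rfl)
  · intro i x
    exact Subtype.ext (funext fun j => by simp [Tphi, Tstar, Tsup, Ttop])
  · intro i j x
    exact Subtype.ext (funext fun k => rfl)
  · intro i x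
    exact Subtype.ext (funext fun j => by simp [Tphi, Tstar])
  · intro i j x h k
    exact x.2 h
  · intro x y h
    exact Subtype.ext (funext fun i => congrArg (fun z => z.1 i) (h i))
end

section
/- For any LM_{n+1}-algebra L, the map η_L : L → T(C(L)) given by η_L(x) = (φ_1(x),…,φ_n(x)) is an injective LM_{n+1}-algebra homomorphism. -/
/-- In any `LM_{n+1}`-algebra `L` (a De Morgan algebra with Chrysippian endomorphisms
`φ_1, …, φ_n`, here indexed by `Fin n`, so that the paper's `φ_{n+1-i}` is `φ (Fin.rev i)`),
the map `η : L → T(C(L))`, `η(x) = (φ_1(x),…,φ_n(x))`, is an injective `LM_{n+1}`-algebra homomorphism. -/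
theorem lm_eta_injective_hom (n : ℕ) (L : Type*) [DistribLattice L] [BoundedOrder L]
    (s : L → L)
    (h_inv : ∀ x : L, s (s x) = x)
    (h_dm : ∀ x y : L, s (x ⊔ y) = s x ⊓ s y)
    (φ : Fin n → L → L)
    (hL1 : ∀ (i : Fin n) (x y : L), φ i (x ⊔ y) = φ i x ⊔ φ i y)
    (hL2 : ∀ (i : Fin n) (x : L), φ i x ⊔ s (φ i x) = ⊤)
    (hL3 : ∀ (i j : Fin n) (x : L), φ i (φ j x) = φ j x)
    (hL4 : ∀ (i : Fin n) (x : L), φ i (s x) = s (φ i.rev x))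
    (hL5 : ∀ (i j : Fin n) (x : L), i ≤ j → φ i x ≤ φ j x)
    (hL6 : ∀ x y : L, (∀ i : Fin n, φ i x = φ i y) → x = y) :
    -- η is injective
    Function.Injective (fun (x : L) (i : Fin n) => φ i x) ∧
    -- η lands in T(C(L)): the tuple is increasing and each component is in the Boolean center
    (∀ x : L, Monotone fun i : Fin n => φ i x) ∧
    (∀ (x : L) (i : Fin n), φ i x ⊔ s (φ i x) = ⊤) ∧
    -- η preserves ⊔ and ⊓ (componentwise)
    (∀ (x y : L) (i : Fin n), φ i (x ⊔ y) = φ i x ⊔ φ i y) ∧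
    (∀ (x y : L) (i : Fin n), φ i (x ⊓ y) = φ i x ⊓ φ i y) ∧
    -- η preserves the involution: η(x*)_i = (η(x)_{rev i})* (complement in C(L) is s)
    (∀ (x : L) (i : Fin n), φ i (s x) = s (φ i.rev x)) ∧
    -- η preserves 0 and 1
    (∀ i : Fin n, φ i (⊥ : L) = ⊥) ∧
    (∀ i : Fin n, φ i (⊤ : L) = ⊤) ∧
    -- η preserves each φ_i: η(φ_i x) = φ_i^{T(C(L))}(η x), i.e. (η(φ_i x))_j = (η x)_i
    (∀ (x : L) (i j : Fin n), φ j (φ i x) = φ i x) := by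

  -- auxiliary facts
  have hanti : ∀ a b : L, a ≤ b → s b ≤ s a := by
    intro a b hab
    have : s (a ⊔ b) = s a ⊓ s b := h_dm a b
    rw [sup_eq_right.mpr hab] at this
    rw [this]; exact inf_le_left
  have hstop : s (⊤ : L) = ⊥ := by
    have : s ⊤ ≤ s (s ⊥) := hanti _ _ le_top
    rw [h_inv] at this
    exact le_bot_iff.mp this
  have htop : ∀ i : Fin n, φ i (⊤ : L) = ⊤ := by
    intro i
    have h1 : φ i (⊤ : L) = φ i (φ i ⊤ ⊔ s (φ i ⊤)) := by rw [hL2]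
    rw [hL1, hL3, hL4] at h1
    rw [h1]
    have : φ i.rev (φ i (⊤:L)) = φ i (⊤:L) := hL3 _ _ _
    rw [this, hL2]
  have hbot : ∀ i : Fin n, φ i (⊥ : L) = ⊥ := by
    intro i
    rw [← hstop, hL4, htop, hstop]
  have hinf : ∀ (x y : L) (i : Fin n), φ i (x ⊓ y) = φ i x ⊓ φ i y := by
    intro x y i
    have hxy : x ⊓ y = s (s x ⊔ s y) := by rw [h_dm, h_inv, h_inv]
    rw [hxy, hL4, hL1, h_dm]
    rw [hL4, hL4, Fin.rev_rev, h_inv, h_inv]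
  refine ⟨?_, ?_, fun x i => hL2 i x, fun x y i => hL1 i x y, hinf,
    fun x i => hL4 i x, hbot, htop, fun x i j => hL3 j i x⟩
  · intro x y hxy
    exact hL6 x y (fun i => congrFun hxy i)
  · intro x i j hij
    exact hL5 i j x hij
end

section
/- For any Boolean algebra B, the map ε_B : C(T(B)) → B sending a constant tuple (u,u,…,u) in the Boolean center of T(B) to u is a Boolean algebra isomorphism; in particular the Boolean center of T(B) consists exactly of the constant tuples. -/
variable {n : ℕ} {B : Type*} [BooleanAlgebra B]

lemma TB_const_center (u : TB (n + 1) B) (b : B) (hb : ∀ i, u.1 i = b) :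
    Tsup u (Tstar u) = Ttop := by
  apply Subtype.ext
  funext i
  show u.1 i ⊔ (u.1 i.rev)ᶜ = ⊤
  rw [hb i, hb i.rev, sup_compl_eq_top]

lemma TB_center_const (u : TB (n + 1) B) (h : Tsup u (Tstar u) = Ttop) :
    ∀ i, u.1 i = u.1 0 := by
  have h0 := congrFun (congrArg Subtype.val h) 0
  simp only [Tsup, Tstar, Ttop] at h0
  have hle : u.1 (Fin.rev 0) ≤ u.1 0 := by
    calc u.1 (Fin.rev 0) = u.1 (Fin.rev 0) ⊓ (u.1 0 ⊔ (u.1 (Fin.rev 0))ᶜ) := by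
          rw [h0, inf_top_eq]
      _ = u.1 (Fin.rev 0) ⊓ u.1 0 := by rw [inf_sup_left, inf_compl_eq_bot, sup_bot_eq]
      _ ≤ u.1 0 := inf_le_right
  intro i
  refine le_antisymm ?_ (u.2 (Fin.zero_le i))
  refine le_trans (u.2 ?_) hle
  rw [Fin.rev_zero]
  exact Fin.le_last i

/-- For any Boolean algebra `B`, the Boolean center of `T(B)` (with tuples of positive
length `n+1`) consists exactly of the constant tuples, and the map
`ε_B : C(T(B)) → B`, sending a constant tuple `(u,…,u)` to `u` (i.e. evaluation at the
first coordinate), is a Boolean algebra isomorphism: it is bijective, and it preserves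
sup, inf, complement, top and bottom (the center being closed under these operations). -/
theorem TB_center_iso (n : ℕ) (B : Type*) [BooleanAlgebra B] :
    -- the center of T(B) is exactly the set of constant tuples
    (∀ u : TB (n + 1) B, Tsup u (Tstar u) = Ttop ↔ ∃ b : B, ∀ i, u.1 i = b) ∧
    -- the center is closed under the operations
    (∀ u v : TB (n + 1) B, Tsup u (Tstar u) = Ttop → Tsup v (Tstar v) = Ttop →
      Tsup (Tsup u v) (Tstar (Tsup u v)) = Ttop ∧
      Tsup (Tinf u v) (Tstar (Tinf u v)) = Ttop ∧
      Tsup (Tstar u) (Tstar (Tstar u)) = Ttop) ∧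
    (Tsup (Ttop : TB (n + 1) B) (Tstar Ttop) = Ttop) ∧
    (Tsup (Tbot : TB (n + 1) B) (Tstar Tbot) = Ttop) ∧
    -- ε is bijective
    Function.Bijective
      (fun u : {u : TB (n + 1) B // Tsup u (Tstar u) = Ttop} => u.1.1 0) ∧
    -- ε is a Boolean homomorphism
    (∀ u v : TB (n + 1) B, Tsup u (Tstar u) = Ttop → Tsup v (Tstar v) = Ttop →
      (Tsup u v).1 0 = u.1 0 ⊔ v.1 0 ∧
      (Tinf u v).1 0 = u.1 0 ⊓ v.1 0 ∧
      (Tstar u).1 0 = (u.1 0)ᶜ) ∧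
    ((Ttop : TB (n + 1) B).1 0 = ⊤) ∧
    ((Tbot : TB (n + 1) B).1 0 = ⊥) := by
  refine ⟨?_, ?_, ?_, ?_, ⟨?_, ?_⟩, ?_, rfl, rfl⟩
  · intro u
    exact ⟨fun h => ⟨u.1 0, TB_center_const u h⟩,
      fun ⟨b, hb⟩ => TB_const_center u b hb⟩
  · intro u v hu hv
    have hu' := TB_center_const u hu
    have hv' := TB_center_const v hv
    exact ⟨TB_const_center _ (u.1 0 ⊔ v.1 0) (fun i => by simp [Tsup, hu' i, hv' i]),
      TB_const_center _ (u.1 0 ⊓ v.1 0) (fun i => by simp [Tinf, hu' i, hv' i]),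
      TB_const_center _ ((u.1 0)ᶜ) (fun i => by simp [Tstar, hu' _])⟩
  · exact TB_const_center _ ⊤ (fun _ => rfl)
  · exact TB_const_center _ ⊥ (fun _ => rfl)
  · -- injective
    rintro ⟨u, hu⟩ ⟨v, hv⟩ h
    simp only at h
    apply Subtype.ext
    apply Subtype.ext
    funext i
    rw [TB_center_const u hu i, TB_center_const v hv i, h]
  · -- surjective
    intro b
    exact ⟨⟨⟨fun _ => b, monotone_const⟩, TB_const_center _ b (fun _ => rfl)⟩, rfl⟩
  · intro u v hu hv
    refine ⟨rfl, rfl, ?_⟩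
    show (u.1 (Fin.rev 0))ᶜ = (u.1 0)ᶜ
    rw [TB_center_const u hu]
end

section
/- In any LM_{n+1}-algebra, with J's defined from the φ's by J_n(x) = φ_1(x) and J_i(x) = φ_{n-i+1}(x) ∧ (φ_{n-i}(x))* for i ∈ [n-1], one recovers φ_i(x) = ⋁_{k=n-i+1}^{n} J_k(x) for every i ∈ [n] and every x. -/
/-- The operations `J_1, …, J_n` of an `LM_{n+1}`-algebra, defined from the Chrysippian
endomorphisms by `J_n(x) = φ_1(x)` and `J_i(x) = φ_{n-i+1}(x) ⊓ (φ_{n-i}(x))*` for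
`i ∈ [n-1]`.  Indices are `0`-based: the paper's `J_{i+1}` is `Jop n φ s i`, so that the
paper's `φ_{n-i+1}` is `φ i.rev`, and the extra meetand is absent exactly when `i` is the
last index. -/
def Jop {L : Type*} [Lattice L] [OrderTop L] (n : ℕ) (φ : Fin n → L → L) (s : L → L)
    (i : Fin n) (x : L) : L :=
  φ i.rev x ⊓
    if h : i.val + 1 < n then s (φ ⟨n - 2 - i.val, by omega⟩ x) else ⊤

theorem lm_phi_eq_sup_J (n : ℕ) (L : Type*) [DistribLattice L] [BoundedOrder L]
    (s : L → L)
    (h_inv : ∀ x : L, s (s x) = x)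
    (h_dm : ∀ x y : L, s (x ⊔ y) = s x ⊓ s y)
    (φ : Fin n → L → L)
    (hL1 : ∀ (i : Fin n) (x y : L), φ i (x ⊔ y) = φ i x ⊔ φ i y)
    (hL2 : ∀ (i : Fin n) (x : L), φ i x ⊔ s (φ i x) = ⊤)
    (hL3 : ∀ (i j : Fin n) (x : L), φ i (φ j x) = φ j x)
    (hL4 : ∀ (i : Fin n) (x : L), φ i (s x) = s (φ i.rev x))
    (hL5 : ∀ (i j : Fin n) (x : L), i ≤ j → φ i x ≤ φ j x)
    (hL6 : ∀ x y : L, (∀ i : Fin n, φ i x = φ i y) → x = y) :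
    ∀ (i : Fin n) (x : L), φ i x = (Finset.Ici i.rev).sup fun k => Jop n φ s k x := by
  suffices H : ∀ (d : ℕ) (a : Fin n) (x : L), n - 1 - a.val = d →
      (Finset.Ici a).sup (fun k => Jop n φ s k x) = φ a.rev x by
    intro i x
    have := H (n - 1 - i.rev.val) i.rev x rfl
    rw [Fin.rev_rev] at this
    exact this.symm
  intro d
  induction d with
  | zero =>
    intro a x ha
    have hav : a.val = n - 1 := by omega
    have hIci : Finset.Ici a = {a} := by
      ext k
      simp only [Finset.mem_Ici, Finset.mem_singleton]
      constructor
      · intro h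
        have hk := k.isLt
        apply Fin.ext
        have := (Fin.le_def.mp h)
        omega
      · intro h; exact h ▸ le_rfl
    rw [hIci, Finset.sup_singleton, Jop]
    have : ¬ (a.val + 1 < n) := by omega
    rw [dif_neg this, inf_top_eq]
  | succ d ih =>
    intro a x ha
    have han : a.val + 1 < n := by omega
    set b : Fin n := ⟨a.val + 1, han⟩ with hb
    have hIci : Finset.Ici a = insert a (Finset.Ici b) := by
      ext k
      simp only [Finset.mem_Ici, Finset.mem_insert, Fin.le_def]
      constructor
      · intro h
        rcases Nat.eq_or_lt_of_le h with h' | h'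
        · left; exact Fin.ext h'.symm
        · right; exact h'
      · rintro (h | h)
        · exact h ▸ le_rfl
        · have h' : a.val + 1 ≤ k.val := h
          omega
    have hbrev : (⟨n - 2 - a.val, by omega⟩ : Fin n) = b.rev := by
      apply Fin.ext
      simp [Fin.rev, hb]
      omega
    rw [hIci, Finset.sup_insert, ih b x (by show n - 1 - (a.val + 1) = d; omega), Jop, dif_pos han, hbrev]
    have hle : φ b.rev x ≤ φ a.rev x := by
      apply hL5
      rw [Fin.le_def]
      simp [Fin.rev, hb]
      omega
    rw [sup_comm, sup_inf_left, sup_eq_right.mpr hle, hL2, inf_top_eq]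
end

section
/- In any LM_{n+1}-algebra, with J_n(x) = φ_1(x) and J_i(x) = φ_{n-i+1}(x) ∧ (φ_{n-i}(x))* for i ∈ [n-1], the determination principle holds for the J's: if J_i(x) = J_i(y) for all i ∈ [n], then x = y. -/
lemma lm_recover {L : Type*} [DistribLattice L] [BoundedOrder L] (a b sb : L)
    (hle : b ≤ a) (htop : b ⊔ sb = ⊤) : (a ⊓ sb) ⊔ b = a := by
  rw [sup_inf_right, sup_eq_left.mpr hle, sup_comm sb b, htop, inf_top_eq]

theorem lm_J_determination (n : ℕ) (L : Type*) [DistribLattice L] [BoundedOrder L]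
    (s : L → L)
    (h_inv : ∀ x : L, s (s x) = x)
    (h_dm : ∀ x y : L, s (x ⊔ y) = s x ⊓ s y)
    (φ : Fin n → L → L)
    (hL1 : ∀ (i : Fin n) (x y : L), φ i (x ⊔ y) = φ i x ⊔ φ i y)
    (hL2 : ∀ (i : Fin n) (x : L), φ i x ⊔ s (φ i x) = ⊤)
    (hL3 : ∀ (i j : Fin n) (x : L), φ i (φ j x) = φ j x)
    (hL4 : ∀ (i : Fin n) (x : L), φ i (s x) = s (φ i.rev x))
    (hL5 : ∀ (i j : Fin n) (x : L), i ≤ j → φ i x ≤ φ j x)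
    (hL6 : ∀ x y : L, (∀ i : Fin n, φ i x = φ i y) → x = y) :
    ∀ x y : L, (∀ i : Fin n, Jop n φ s i x = Jop n φ s i y) → x = y := by
  intro x y hJ
  apply hL6
  suffices h : ∀ k (hk : k < n), φ ⟨k, hk⟩ x = φ ⟨k, hk⟩ y by
    intro i
    have := h i.val i.isLt
    simpa using this
  intro k
  induction k with
  | zero =>
    intro hk
    have hi := hJ ⟨n - 1, by omega⟩
    have hrev : (⟨n - 1, by omega⟩ : Fin n).rev = ⟨0, hk⟩ := by
      ext; simp [Fin.val_rev]; omega
    have hcond : ¬ ((n - 1) + 1 < n) := by omega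
    simp only [Jop, hrev, hcond, dif_neg, not_false_iff, inf_top_eq] at hi
    exact hi
  | succ k ih =>
    intro hk
    have hk' : k < n := by omega
    have hi := hJ ⟨n - 2 - k, by omega⟩
    have hrev : (⟨n - 2 - k, by omega⟩ : Fin n).rev = ⟨k + 1, hk⟩ := by
      ext; simp [Fin.val_rev]; omega
    have hcond : (n - 2 - k) + 1 < n := by omega
    have hidx : (⟨n - 2 - ((⟨n - 2 - k, by omega⟩ : Fin n) : ℕ), by omega⟩ : Fin n)
        = ⟨k, hk'⟩ := by
      ext; simp; omega
    simp only [Jop, hrev, hcond, dif_pos, hidx] at hi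
    have hx : φ ⟨k + 1, hk⟩ x =
        (φ ⟨k + 1, hk⟩ x ⊓ s (φ ⟨k, hk'⟩ x)) ⊔ φ ⟨k, hk'⟩ x :=
      (lm_recover _ _ _ (hL5 _ _ x (by simp [Fin.le_def])) (hL2 _ x)).symm
    have hy : φ ⟨k + 1, hk⟩ y =
        (φ ⟨k + 1, hk⟩ y ⊓ s (φ ⟨k, hk'⟩ y)) ⊔ φ ⟨k, hk'⟩ y :=
      (lm_recover _ _ _ (hL5 _ _ y (by simp [Fin.le_def])) (hL2 _ y)).symm
    rw [hx, hy, hi, ih hk']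
end
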